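/- Every nonempty smooth property P has a generic string (one that is simultaneously LR-generic and RL-generic) for a fixed 2DFA M. -/

import Mathlib

/-- A two-way deterministic finite automaton: `step q a = (q', d)` where `d = true`
means the head moves right and `d = false` means it moves left. -/
structure TDFA (Q A : Type) where
  step : Q → A → Q × Bool
  start : Q
  accept : Q

namespace TDFA

variable {Q A : Type}

/-- One step of `M` on string `w`. A configuration is a pair (state, position),
with positions `1, …, w.length` on the symbols of `w`, position `0` meaning the
computation has fallen off the left end and `w.length + 1` off the right end. -/
def Step (M : TDFA Q A) (w : List A) (c c' : Q × ℕ) : Prop :=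
  ∃ a, w[c.2 - 1]? = some a ∧ 1 ≤ c.2 ∧
    c' = ((M.step c.1 a).1, if (M.step c.1 a).2 then c.2 + 1 else c.2 - 1)

/-- The computation of `M` on `w` started in state `p` at position `j`
hits right into state `q`. -/
def ReachesRight (M : TDFA Q A) (w : List A) (p : Q) (j : ℕ) (q : Q) : Prop :=
  Relation.ReflTransGen (M.Step w) (p, j) (q, w.length + 1)

/-- The computation of `M` on `w` started in state `p` at position `j`
hits left into state `q`. -/
def ReachesLeft (M : TDFA Q A) (w : List A) (p : Q) (j : ℕ) (q : Q) : Prop :=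
  Relation.ReflTransGen (M.Step w) (p, j) (q, 0)

/-- `Q_LR(w)`: states hit right by left computations of `M` on `w`. -/
def QLR (M : TDFA Q A) (w : List A) : Set Q := {q | ∃ p, M.ReachesRight w p 1 q}

/-- `Q_RL(w)`: states hit left by right computations of `M` on `w`. -/
def QRL (M : TDFA Q A) (w : List A) : Set Q := {q | ∃ p, M.ReachesLeft w p w.length q}

end TDFA

/-- `P` is smooth: any two of its strings admit a connecting infix in `P`. -/
def SmoothProp {A : Type} (P : Set (List A)) : Prop :=
  ∀ x ∈ P, ∀ z ∈ P, ∃ y : List A, x ++ y ++ z ∈ P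

/-- `y` is LR-generic for `P`. -/
def LRGeneric {Q A : Type} (M : TDFA Q A) (P : Set (List A)) (y : List A) : Prop :=
  y ∈ P ∧ ∀ z : List A, y ++ z ∈ P → (M.QLR y).ncard = (M.QLR (y ++ z)).ncard

/-- `y` is RL-generic for `P`. -/
def RLGeneric {Q A : Type} (M : TDFA Q A) (P : Set (List A)) (y : List A) : Prop :=
  y ∈ P ∧ ∀ z : List A, z ++ y ∈ P → (M.QRL y).ncard = (M.QRL (z ++ y)).ncard

/- ------------------- auxiliary development ------------------- -/

namespace TDFA

variable {M : TDFA Q A}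

/-- Steps are deterministic. -/
lemma step_det {w : List A} {c c₁ c₂ : Q × ℕ} (h₁ : M.Step w c c₁) (h₂ : M.Step w c c₂) :
    c₁ = c₂ := by
  obtain ⟨a, ha, -, rfl⟩ := h₁
  obtain ⟨b, hb, -, rfl⟩ := h₂
  rw [ha] at hb
  cases hb
  rfl

/-- A step requires the position to be within bounds. -/
lemma step_pos {w : List A} {c c' : Q × ℕ} (h : M.Step w c c') :
    1 ≤ c.2 ∧ c.2 ≤ w.length := by
  obtain ⟨a, ha, h1, -⟩ := h
  have := (List.getElem?_eq_some_iff.1 ha).1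
  exact ⟨h1, by omega⟩

lemma not_step_right {w : List A} {q : Q} {c' : Q × ℕ} : ¬ M.Step w (q, w.length + 1) c' := by
  intro h
  have := (step_pos h).2
  simp at this

lemma not_step_left {w : List A} {q : Q} {c' : Q × ℕ} : ¬ M.Step w (q, 0) c' := by
  intro h
  have := (step_pos h).1
  simp at this

/-- Unique terminal configuration for a deterministic relation. -/
lemma rtg_unique {α : Type*} {r : α → α → Prop}
    (hdet : ∀ {a b c : α}, r a b → r a c → b = c) {b c : α}
    (hb : ∀ x, ¬ r b x) (hc : ∀ x, ¬ r c x) {a : α}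
    (h₁ : Relation.ReflTransGen r a b) : Relation.ReflTransGen r a c → b = c := by
  induction h₁ using Relation.ReflTransGen.head_induction_on with
  | refl =>
    intro h₂
    rcases h₂.cases_head with rfl | ⟨x, hx, -⟩
    · rfl
    · exact absurd hx (hb x)
  | head hab h₁' ih =>
    intro h₂
    rcases h₂.cases_head with rfl | ⟨x, hx, h₂'⟩
    · exact absurd hab (hc _)
    · exact ih ((hdet hab hx) ▸ h₂')

/-- Splitting lemma: computations hitting the right end of `y ++ z` from inside `y`
first hit the right end of `y`. -/
lemma splitLR {y z : List A} {q' : Q} {c : Q × ℕ}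
    (h : Relation.ReflTransGen (M.Step (y ++ z)) c (q', (y ++ z).length + 1)) :
    c.2 ≤ y.length + 1 →
    ∃ q, Relation.ReflTransGen (M.Step y) c (q, y.length + 1) ∧
      Relation.ReflTransGen (M.Step (y ++ z)) (q, y.length + 1) (q', (y ++ z).length + 1) := by
  induction h using Relation.ReflTransGen.head_induction_on with
  | refl =>
    intro hle
    simp only [List.length_append] at hle
    have hz : z.length = 0 := by omega
    have hz' : z = [] := List.length_eq_zero_iff.1 hz
    subst hz'
    refine ⟨q', ?_, ?_⟩ <;> simp only [List.append_nil] <;> exact Relation.ReflTransGen.refl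
  | @head c c' hab h₁ ih =>
    intro hle
    by_cases hc : c.2 = y.length + 1
    · have hcc : (c.1, y.length + 1) = c := by rw [← hc]
      refine ⟨c.1, ?_, ?_⟩
      · rw [hcc]
      · rw [hcc]
        exact Relation.ReflTransGen.head hab h₁
    · obtain ⟨a, ha, h1, heq⟩ := hab
      have hlt : c.2 - 1 < y.length := by omega
      have hstepy : M.Step y c c' := by
        refine ⟨a, ?_, h1, heq⟩
        rw [List.getElem?_append_left hlt] at ha
        exact ha
      have hc' : c'.2 ≤ y.length + 1 := by
        rw [heq]
        dsimp only
        split <;> omega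
      obtain ⟨q, hq1, hq2⟩ := ih hc'
      exact ⟨q, Relation.ReflTransGen.head hstepy hq1, hq2⟩

/-- Splitting lemma: computations hitting the left end of `z ++ y` from inside `y`
first hit the left end of `y`. -/
lemma splitRL {z y : List A} {q' : Q} {c : Q × ℕ}
    (h : Relation.ReflTransGen (M.Step (z ++ y)) c (q', 0)) :
    z.length ≤ c.2 →
    ∃ q, Relation.ReflTransGen (M.Step y) (c.1, c.2 - z.length) (q, 0) ∧
      Relation.ReflTransGen (M.Step (z ++ y)) (q, z.length) (q', 0) := by
  induction h using Relation.ReflTransGen.head_induction_on with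
  | refl =>
    intro hle
    have hz : z.length = 0 := by
      simp only at hle
      omega
    refine ⟨q', ?_, ?_⟩
    · simp only [hz]
      exact Relation.ReflTransGen.refl
    · rw [hz]
  | @head c c' hab h₁ ih =>
    intro hle
    by_cases hc : c.2 = z.length
    · refine ⟨c.1, ?_, ?_⟩
      · have h0 : c.2 - z.length = 0 := by omega
        rw [h0]
      · have hcc : (c.1, z.length) = c := by rw [← hc]
        rw [hcc]
        exact Relation.ReflTransGen.head hab h₁
    · obtain ⟨a, ha, h1, heq⟩ := hab
      have hge : z.length + 1 ≤ c.2 := by omega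
      have hstepy : M.Step y (c.1, c.2 - z.length) (c'.1, c'.2 - z.length) := by
        refine ⟨a, ?_, by omega, ?_⟩
        · have hidx : (c.1, c.2 - z.length).2 - 1 = c.2 - 1 - z.length := by
            dsimp only
            omega
          rw [hidx, ← List.getElem?_append_right (l₁ := z) (by omega)]
          exact ha
        · rw [heq, Prod.ext_iff]
          refine ⟨rfl, ?_⟩
          dsimp only
          split <;> omega
      have hc' : z.length ≤ c'.2 := by
        rw [heq]
        dsimp only
        split <;> omega
      obtain ⟨q, hq1, hq2⟩ := ih hc'
      exact ⟨q, Relation.ReflTransGen.head hstepy hq1, hq2⟩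

lemma ncard_QLR_append_le [Fintype Q] (M : TDFA Q A) (y z : List A) :
    (M.QLR (y ++ z)).ncard ≤ (M.QLR y).ncard := by
  classical
  set f : Q → Q := fun q =>
    if h : ∃ q', M.ReachesRight (y ++ z) q (y.length + 1) q' then h.choose else q with hf
  have hsub : M.QLR (y ++ z) ⊆ f '' M.QLR y := by
    rintro q' ⟨p, hp⟩
    obtain ⟨q, h1, h2⟩ := splitLR hp (by omega)
    refine ⟨q, ⟨p, h1⟩, ?_⟩
    have hex : ∃ q'', M.ReachesRight (y ++ z) q (y.length + 1) q'' := ⟨q', h2⟩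
    have hspec : Relation.ReflTransGen (M.Step (y ++ z)) (q, y.length + 1)
        (hex.choose, (y ++ z).length + 1) := hex.choose_spec
    have : (hex.choose, (y ++ z).length + 1) = (q', (y ++ z).length + 1) :=
      rtg_unique (r := M.Step (y ++ z)) (fun h h' => step_det h h')
        (fun x => not_step_right) (fun x => not_step_right) hspec h2
    simp only [hf, dif_pos hex]
    exact (Prod.ext_iff.1 this).1
  calc (M.QLR (y ++ z)).ncard ≤ (f '' M.QLR y).ncard :=
        Set.ncard_le_ncard hsub (Set.toFinite _)
    _ ≤ (M.QLR y).ncard := Set.ncard_image_le (Set.toFinite _)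

lemma ncard_QRL_append_le [Fintype Q] (M : TDFA Q A) (z y : List A) :
    (M.QRL (z ++ y)).ncard ≤ (M.QRL y).ncard := by
  classical
  set f : Q → Q := fun q =>
    if h : ∃ q', M.ReachesLeft (z ++ y) q z.length q' then h.choose else q with hf
  have hsub : M.QRL (z ++ y) ⊆ f '' M.QRL y := by
    rintro q' ⟨p, hp⟩
    have hp' : Relation.ReflTransGen (M.Step (z ++ y)) (p, z.length + y.length) (q', 0) := by
      simpa [ReachesLeft] using hp
    obtain ⟨q, h1, h2⟩ := splitRL hp' (by omega)
    refine ⟨q, ⟨p, ?_⟩, ?_⟩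
    · have : z.length + y.length - z.length = y.length := by omega
      rw [this] at h1
      exact h1
    · have hex : ∃ q'', M.ReachesLeft (z ++ y) q z.length q'' := ⟨q', h2⟩
      have hspec : Relation.ReflTransGen (M.Step (z ++ y)) (q, z.length)
          (hex.choose, (0:ℕ)) := hex.choose_spec
      have : (hex.choose, (0:ℕ)) = (q', (0:ℕ)) :=
        rtg_unique (r := M.Step (z ++ y)) (fun h h' => step_det h h')
          (fun x => not_step_left) (fun x => not_step_left) hspec h2
      simp only [hf, dif_pos hex]
      exact (Prod.ext_iff.1 this).1
  calc (M.QRL (z ++ y)).ncard ≤ (f '' M.QRL y).ncard :=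
        Set.ncard_le_ncard hsub (Set.toFinite _)
    _ ≤ (M.QRL y).ncard := Set.ncard_image_le (Set.toFinite _)

end TDFA

/-- Every nonempty smooth property has a generic string
(simultaneously LR-generic and RL-generic). -/
theorem exists_generic {Q A : Type} [Fintype Q] (M : TDFA Q A)
    (P : Set (List A)) (hP : P.Nonempty) (hsm : SmoothProp P) :
    ∃ y : List A, LRGeneric M P y ∧ RLGeneric M P y := by
  classical
  -- minimizer for QLR
  obtain ⟨x₀, hx₀⟩ := hP
  have hT1 : {n | ∃ y ∈ P, (M.QLR y).ncard = n}.Nonempty := ⟨_, x₀, hx₀, rfl⟩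
  obtain ⟨y₁, hy₁P, hy₁n⟩ := Nat.sInf_mem hT1
  have hmin1 : ∀ y' ∈ P, (M.QLR y₁).ncard ≤ (M.QLR y').ncard := by
    intro y' hy'
    rw [hy₁n]
    exact Nat.sInf_le ⟨y', hy', rfl⟩
  have hT2 : {n | ∃ y ∈ P, (M.QRL y).ncard = n}.Nonempty := ⟨_, x₀, hx₀, rfl⟩
  obtain ⟨y₂, hy₂P, hy₂n⟩ := Nat.sInf_mem hT2
  have hmin2 : ∀ y' ∈ P, (M.QRL y₂).ncard ≤ (M.QRL y').ncard := by
    intro y' hy'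
    rw [hy₂n]
    exact Nat.sInf_le ⟨y', hy', rfl⟩
  obtain ⟨w, hw⟩ := hsm y₁ hy₁P y₂ hy₂P
  refine ⟨y₁ ++ w ++ y₂, ⟨hw, ?_⟩, ⟨hw, ?_⟩⟩
  · intro z hz
    have h1 : (M.QLR (y₁ ++ w ++ y₂ ++ z)).ncard ≤ (M.QLR (y₁ ++ w ++ y₂)).ncard :=
      TDFA.ncard_QLR_append_le M _ z
    have h2 : (M.QLR (y₁ ++ w ++ y₂)).ncard ≤ (M.QLR y₁).ncard := by
      have := TDFA.ncard_QLR_append_le M y₁ (w ++ y₂)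
      simpa [List.append_assoc] using this
    have h3 := hmin1 _ hz
    omega
  · intro z hz
    have h1 : (M.QRL (z ++ (y₁ ++ w ++ y₂))).ncard ≤ (M.QRL (y₁ ++ w ++ y₂)).ncard :=
      TDFA.ncard_QRL_append_le M z _
    have h2 : (M.QRL (y₁ ++ w ++ y₂)).ncard ≤ (M.QRL y₂).ncard :=
      TDFA.ncard_QRL_append_le M (y₁ ++ w) y₂
    have h3 := hmin2 _ hz
    omega
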